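/- arXiv:1303.4579 — 4 statements merged into one kernel-verified Lean document; each statement's English description precedes it below -/
import Mathlib

section
/- The minimum 3-covering energy of the path P₃ depends on the choice of minimum 3-covering set: with Q = {v₂} the energy is 3, while with Q = {v₁} the energy is not equal to 3 (it equals the sum of absolute values of the roots of λ³ - λ² - 2λ + 1, which is strictly greater than 3). -/
open Polynomial Matrix

/-- The minimum 3-covering energy of a real matrix: the sum of the absolute
values of the roots of its characteristic polynomial (with multiplicity). -/
noncomputable def energy {n : ℕ} (A : Matrix (Fin n) (Fin n) ℝ) : ℝ :=
  (A.charpoly.roots.map (fun x => |x|)).sum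

lemma charpoly_one : (!![0, 1, 0; 1, 1, 1; 0, 1, 0] : Matrix (Fin 3) (Fin 3) ℝ).charpoly
    = X^3 - X^2 - 2*X := by
  rw [Matrix.charpoly, Matrix.det_fin_three]
  simp [charmatrix_apply, Matrix.vecHead, Matrix.vecTail]
  ring

lemma charpoly_two : (!![1, 1, 0; 1, 0, 1; 0, 1, 0] : Matrix (Fin 3) (Fin 3) ℝ).charpoly
    = X^3 - X^2 - 2*X + 1 := by
  rw [Matrix.charpoly, Matrix.det_fin_three]
  simp [charmatrix_apply, Matrix.vecHead, Matrix.vecTail]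
  ring

lemma roots_one : ((X^3 - X^2 - 2*X : ℝ[X]).roots.map (fun x => |x|)).sum = 3 := by
  have h : (X^3 - X^2 - 2*X : ℝ[X]) = (X - C 0) * ((X - C 2) * (X - C (-1))) := by
    simp only [_root_.map_neg, Polynomial.C_eq_natCast, _root_.map_zero, _root_.map_one, map_ofNat]
    ring
  have h2 : ((X - C 2) * (X - C (-1)) : ℝ[X]) ≠ 0 := by
    intro h'
    have := congrArg (eval 3) h'
    norm_num at this
  have h1 : ((X - C 0) : ℝ[X]) ≠ 0 := X_sub_C_ne_zero 0
  rw [h, roots_mul (mul_ne_zero h1 h2), roots_mul h2, roots_X_sub_C,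
    roots_X_sub_C, roots_X_sub_C]
  norm_num

noncomputable def p3 : ℝ[X] := X ^ 3 - X ^ 2 - 2 * X + 1

lemma p3_natDegree : p3.natDegree = 3 := by unfold p3; compute_degree!

lemma p3_monic : p3.Monic := by unfold p3; monicity!

lemma p3_cont : Continuous (fun x : ℝ => p3.eval x) := by
  unfold p3; continuity

lemma p3_eval (x : ℝ) : p3.eval x = x^3 - x^2 - 2*x + 1 := by simp [p3]

lemma p3_nextCoeff : p3.nextCoeff = -1 := by
  rw [nextCoeff, p3_natDegree]
  simp [p3, coeff_one, coeff_X]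

lemma p3_roots_3 : 3 < (p3.roots.map (fun x => |x|)).sum := by
  obtain ⟨r1, hr1m, hr1⟩ : ∃ r ∈ Set.Ioo (-2 : ℝ) (-1), p3.eval r = 0 := by
    have := intermediate_value_Ioo (by norm_num : (-2:ℝ) ≤ -1)
      (p3_cont.continuousOn (s := Set.Icc (-2 : ℝ) (-1)))
    have h0 : (0:ℝ) ∈ Set.Ioo (p3.eval (-2)) (p3.eval (-1)) := by
      rw [p3_eval, p3_eval]; norm_num
    obtain ⟨r, hr, hre⟩ := this h0
    exact ⟨r, hr, hre⟩
  obtain ⟨r2, hr2m, hr2⟩ : ∃ r ∈ Set.Ioo (0 : ℝ) 1, p3.eval r = 0 := by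
    have := intermediate_value_Ioo' (by norm_num : (0:ℝ) ≤ 1)
      (p3_cont.continuousOn (s := Set.Icc (0 : ℝ) 1))
    have h0 : (0:ℝ) ∈ Set.Ioo (p3.eval 1) (p3.eval 0) := by
      rw [p3_eval, p3_eval]; norm_num
    obtain ⟨r, hr, hre⟩ := this h0
    exact ⟨r, hr, hre⟩
  obtain ⟨r3, hr3m, hr3⟩ : ∃ r ∈ Set.Ioo (1 : ℝ) 2, p3.eval r = 0 := by
    have := intermediate_value_Ioo (by norm_num : (1:ℝ) ≤ 2)
      (p3_cont.continuousOn (s := Set.Icc (1 : ℝ) 2))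
    have h0 : (0:ℝ) ∈ Set.Ioo (p3.eval 1) (p3.eval 2) := by
      rw [p3_eval, p3_eval]; norm_num
    obtain ⟨r, hr, hre⟩ := this h0
    exact ⟨r, hr, hre⟩
  obtain ⟨h1a, h1b⟩ := hr1m
  obtain ⟨h2a, h2b⟩ := hr2m
  obtain ⟨h3a, h3b⟩ := hr3m
  have hne : p3 ≠ 0 := p3_monic.ne_zero
  have hm1 : r1 ∈ p3.roots := by rw [mem_roots hne]; exact hr1
  have hm2 : r2 ∈ p3.roots := by rw [mem_roots hne]; exact hr2
  have hm3 : r3 ∈ p3.roots := by rw [mem_roots hne]; exact hr3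
  have h12 : r1 ≠ r2 := by linarith
  have h13 : r1 ≠ r3 := by linarith
  have h23 : r2 ≠ r3 := by linarith
  have hle : (r1 ::ₘ r2 ::ₘ {r3}) ≤ p3.roots := by
    rw [Multiset.le_iff_count]
    intro x
    rw [Polynomial.count_roots]
    rcases eq_or_ne x r1 with rfl | hx1
    · have := (Polynomial.rootMultiplicity_pos hne).mpr hr1
      simp [Multiset.count_cons, Multiset.count_singleton, h12, h13]
      omega
    · rcases eq_or_ne x r2 with rfl | hx2
      · have := (Polynomial.rootMultiplicity_pos hne).mpr hr2
        simp [Multiset.count_cons, Multiset.count_singleton, hx1, h23]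
        omega
      · rcases eq_or_ne x r3 with rfl | hx3
        · have := (Polynomial.rootMultiplicity_pos hne).mpr hr3
          simp [Multiset.count_cons, Multiset.count_singleton, hx1, hx2]
          omega
        · simp [Multiset.count_cons, Multiset.count_singleton, hx1, hx2, hx3]
  have hcard : Multiset.card p3.roots ≤ 3 := by
    have := p3.card_roots'
    rwa [p3_natDegree] at this
  have heq : p3.roots = (r1 ::ₘ r2 ::ₘ {r3}) :=
    (Multiset.eq_of_le_of_card_le hle (by simpa using hcard)).symm
  have hsplits : Splits p3 :=
    splits_iff_card_roots.mpr (by rw [heq, p3_natDegree]; simp)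
  have hsum : p3.roots.sum = 1 := by
    have := hsplits.nextCoeff_eq_neg_sum_roots_of_monic p3_monic
    rw [p3_nextCoeff] at this
    linarith
  rw [heq] at hsum ⊢
  simp only [Multiset.map_cons, Multiset.map_singleton, Multiset.sum_cons,
    Multiset.sum_singleton] at hsum ⊢
  rw [abs_of_neg (by linarith : r1 < 0), abs_of_pos (by linarith : 0 < r2),
    abs_of_pos (by linarith : 0 < r3)]
  linarith

theorem stmt_2 :
    energy (!![0, 1, 0; 1, 1, 1; 0, 1, 0] : Matrix (Fin 3) (Fin 3) ℝ) = 3 ∧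
    energy (!![1, 1, 0; 1, 0, 1; 0, 1, 0] : Matrix (Fin 3) (Fin 3) ℝ)
      = (((X ^ 3 - X ^ 2 - 2 * X + 1 : ℝ[X]).roots).map (fun x => |x|)).sum ∧
    3 < energy (!![1, 1, 0; 1, 0, 1; 0, 1, 0] : Matrix (Fin 3) (Fin 3) ℝ) := by
  refine ⟨?_, ?_, ?_⟩
  · rw [energy, charpoly_one]
    exact roots_one
  · rw [energy, charpoly_two]
  · rw [energy, charpoly_two]
    exact p3_roots_3
end

section
/- For n ≥ 3, the characteristic polynomial of the n×n matrix A with A_ij = 1 for i ≠ j, A_ii = 1 for 1 ≤ i ≤ n-2, and A_ii = 0 for i ∈ {n-1, n}, is (λ+1)·λ^{n-3}·(λ² - (n-1)λ - (n-2)). -/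
open Polynomial Matrix Finset

/-- The minimum 3-covering matrix of the complete graph `K_n`, with 3-covering
set consisting of the first `n - 2` vertices: all off-diagonal entries are 1,
the first `n - 2` diagonal entries are 1, and the last two are 0. -/
def covMatrix (n : ℕ) : Matrix (Fin n) (Fin n) ℝ :=
  Matrix.of fun i j => if i = j then (if (i : ℕ) < n - 2 then 1 else 0) else 1

theorem stmt_6 (n : ℕ) (hn : 3 ≤ n) :
    (covMatrix n).charpoly
      = (X + 1) * X ^ (n - 3) * (X ^ 2 - C ((n : ℝ) - 1) * X - C ((n : ℝ) - 2)) := by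
  set K := RatFunc ℝ
  have hinj : Function.Injective (algebraMap ℝ[X] K) := RatFunc.algebraMap_injective ℝ
  apply hinj
  set φ := algebraMap ℝ[X] K with hφ
  set x : K := φ X with hxdef
  have hx : x ≠ 0 := by
    rw [hxdef]
    exact (map_ne_zero_iff φ hinj).mpr Polynomial.X_ne_zero
  have hx1 : x + 1 ≠ 0 := by
    have : x + 1 = φ (X + 1) := by simp [hxdef]
    rw [this]
    refine (map_ne_zero_iff φ hinj).mpr ?_
    intro h
    have := congrArg (Polynomial.eval 0) h
    simp at this
  set e : Fin n → K := fun i => if (i : ℕ) < n - 2 then x else x + 1 with he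
  have hcard : (univ.filter fun i : Fin n => (i : ℕ) < n - 2).card = n - 2 := by
    have hb : n - 2 < n := by omega
    have : (univ.filter fun i : Fin n => (i : ℕ) < n - 2) = Finset.Iio ⟨n - 2, hb⟩ := by
      ext i; simp [Fin.lt_def]
    rw [this, Fin.card_Iio]
  have hcard' : (univ.filter fun i : Fin n => ¬ (i : ℕ) < n - 2).card = 2 := by
    have := Finset.card_filter_add_card_filter_not
      (s := (univ : Finset (Fin n))) (p := fun i : Fin n => (i : ℕ) < n - 2)
    rw [hcard, Finset.card_univ, Fintype.card_fin] at this
    omega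
  have hefac : φ.mapMatrix (charmatrix (covMatrix n))
      = (Matrix.diagonal e) *
        (1 + Matrix.replicateCol Unit (fun i => -(e i)⁻¹) * Matrix.replicateRow Unit (fun _ => (1 : K))) := by
    ext i j
    have hene : e i ≠ 0 := by
      rw [he]; dsimp only; split <;> assumption
    rw [Matrix.diagonal_mul]
    simp only [RingHom.mapMatrix_apply, Matrix.map_apply, Matrix.add_apply, Matrix.one_apply,
      Matrix.mul_apply, Finset.sum_const, Matrix.replicateCol_apply, Matrix.replicateRow_apply,
      Finset.card_univ, Fintype.card_unit, one_smul, smul_eq_mul, mul_one]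
    by_cases hij : i = j
    · subst hij
      rw [charmatrix_apply_eq]
      by_cases hi : (i : ℕ) < n - 2
      · simp only [covMatrix, Matrix.of_apply, if_pos rfl, hi, if_true,
          map_sub, _root_.map_one, ← hxdef]
        rw [he]; simp only [hi, if_true]
        rw [mul_add, mul_neg, mul_inv_cancel₀ hx]
        ring
      · simp only [covMatrix, Matrix.of_apply, if_pos rfl, hi, if_false,
          map_sub, map_zero, sub_zero, ← hxdef]
        rw [he]; simp only [hi, if_false]
        simp [mul_add, hx1]
        rw [mul_neg, mul_inv_cancel₀ hx1]
        ring
    · rw [charmatrix_apply_ne _ _ _ hij]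
      simp only [if_neg hij, covMatrix, Matrix.of_apply, if_neg hij, map_neg, _root_.map_one]
      rw [zero_add, mul_neg, mul_inv_cancel₀ hene]
  rw [Matrix.charpoly, RingHom.map_det, hefac, Matrix.det_mul,
    Matrix.det_one_add_replicateCol_mul_replicateRow, Matrix.det_diagonal]
  have hprod : ∏ i, e i = x ^ (n - 2) * (x + 1) ^ 2 := by
    rw [he, Finset.prod_ite, Finset.prod_const, Finset.prod_const, hcard, hcard']
  have h2n : (2 : ℕ) ≤ n := by omega
  have hdot : ((fun _ : Fin n => (1 : K)) ⬝ᵥ fun i => -(e i)⁻¹)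
      = -(((n : K) - 2) * x⁻¹ + 2 * (x + 1)⁻¹) := by
    simp only [dotProduct, one_mul, he]
    simp only [apply_ite Inv.inv]
    rw [Finset.sum_neg_distrib, Finset.sum_ite, Finset.sum_const, Finset.sum_const, hcard, hcard']
    simp only [nsmul_eq_mul]
    push_cast [Nat.cast_sub h2n]
    rw [Nat.cast_sub h2n]; push_cast
    ring
  rw [hprod, hdot]
  -- RHS
  rw [_root_.map_mul, _root_.map_mul, map_add, _root_.map_one, map_pow, map_sub, map_sub, _root_.map_mul, map_pow]
  have hC1 : φ (C ((n : ℝ) - 1)) = (n : K) - 1 := by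
    simp [map_sub, Polynomial.C_eq_natCast]
  have hC2 : φ (C ((n : ℝ) - 2)) = (n : K) - 2 := by
    simp [map_sub, Polynomial.C_eq_natCast, map_ofNat]
  rw [hC1, hC2, ← hxdef]
  have h32 : n - 2 = (n - 3) + 1 := by omega
  rw [h32, pow_succ]
  linear_combination (-(x ^ (n - 3)) * ((n : K) - 2) * (x + 1) ^ 2) * mul_inv_cancel₀ hx
    + (-2 * x ^ (n - 3) * x * (x + 1)) * mul_inv_cancel₀ hx1
end

section
/- For n ≥ 3, the eigenvalues of the n×n matrix A (off-diagonal entries 1, first n-2 diagonal entries 1, last two diagonal entries 0) are: 0 with multiplicity n-3, -1 with multiplicity 1, and the two roots ((n-1) ± √(n²+2n-7))/2 of λ² - (n-1)λ - (n-2). -/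
open Polynomial Matrix

lemma eval_charpoly' {n : ℕ} (M : Matrix (Fin n) (Fin n) ℝ) (x : ℝ) :
    M.charpoly.eval x = (x • (1 : Matrix (Fin n) (Fin n) ℝ) - M).det := by
  rw [Matrix.charpoly, ← Polynomial.coe_evalRingHom, RingHom.map_det]
  congr 1
  ext i j
  by_cases h : i = j <;>
    simp [charmatrix_apply, Matrix.map_apply, h, Matrix.one_apply, Matrix.diagonal_apply,
      Matrix.sub_apply, Matrix.smul_apply]

lemma det_cov (n : ℕ) (hn : 3 ≤ n) (x : ℝ) (hx : 1 < x) :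
    (x • (1 : Matrix (Fin n) (Fin n) ℝ) - covMatrix n).det
      = x ^ (n - 3) * (x + 1) * (x ^ 2 - ((n : ℝ) - 1) * x - ((n : ℝ) - 2)) := by
  obtain ⟨m, rfl⟩ : ∃ m, n = m + 3 := ⟨n - 3, by omega⟩
  have e2 : m + 3 - 2 = m + 1 := by omega
  have e3 : m + 3 - 3 = m := by omega
  rw [e2, e3] at *
  have hx0 : x ≠ 0 := by linarith
  have hx1 : x + 1 ≠ 0 := by linarith
  set d : Fin (m + 3) → ℝ := fun i => if (i : ℕ) < m + 1 then x else x + 1 with hd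
  have hdne : ∀ i, d i ≠ 0 := by
    intro i; simp only [hd]; split <;> assumption
  have hsplit : x • (1 : Matrix (Fin (m + 3)) (Fin (m + 3)) ℝ) - covMatrix (m + 3)
      = Matrix.diagonal d +
        Matrix.replicateCol Unit (fun _ => (-1 : ℝ)) * Matrix.replicateRow Unit (fun _ => (1 : ℝ)) := by
    ext i j
    by_cases h : i = j <;>
      simp [covMatrix, Matrix.diagonal_apply, hd, e2, h, Matrix.mul_apply,
        Matrix.one_apply, Matrix.sub_apply, Matrix.smul_apply] <;> split <;> ring
  have hdet : (Matrix.diagonal d).det = x ^ (m + 1) * (x + 1) ^ 2 := by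
    rw [Matrix.det_diagonal]
    have h1 : ∏ i : Fin (m + 3), d i
        = ∏ i ∈ Finset.range (m + 3), (if i < m + 1 then x else x + 1) :=
      Fin.prod_univ_eq_prod_range (fun i => if i < m + 1 then x else x + 1) (m + 3)
    rw [h1, Finset.prod_range_succ, Finset.prod_range_succ]
    have h3 : ∏ i ∈ Finset.range (m + 1), (if i < m + 1 then x else x + 1) = x ^ (m + 1) := by
      rw [Finset.prod_congr rfl (fun i hi => if_pos (Finset.mem_range.mp hi)),
        Finset.prod_const, Finset.card_range]
    rw [h3, if_neg (by omega), if_neg (by omega)]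
    ring
  have hunit : IsUnit (Matrix.diagonal d).det := by
    rw [hdet]
    exact (isUnit_iff_ne_zero).mpr (by positivity)
  have hinv : (Matrix.diagonal d)⁻¹ = Matrix.diagonal (fun i => (d i)⁻¹) := by
    apply Matrix.inv_eq_right_inv
    rw [Matrix.diagonal_mul_diagonal]
    have : (fun i => d i * (d i)⁻¹) = fun _ : Fin (m + 3) => (1 : ℝ) :=
      funext fun i => mul_inv_cancel₀ (hdne i)
    rw [this, Matrix.diagonal_one]
  have hsum : ∑ i : Fin (m + 3), (d i)⁻¹ = ((m : ℝ) + 1) * x⁻¹ + 2 * (x + 1)⁻¹ := by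
    have h1 : ∑ i : Fin (m + 3), (d i)⁻¹
        = ∑ i ∈ Finset.range (m + 3), (if i < m + 1 then x else x + 1)⁻¹ :=
      Fin.sum_univ_eq_sum_range (fun i => (if i < m + 1 then x else x + 1)⁻¹) (m + 3)
    rw [h1, Finset.sum_range_succ, Finset.sum_range_succ]
    have h3 : ∑ i ∈ Finset.range (m + 1), (if i < m + 1 then x else x + 1)⁻¹
        = ((m : ℝ) + 1) * x⁻¹ := by
      rw [Finset.sum_congr rfl (fun i hi => by rw [if_pos (Finset.mem_range.mp hi)]),
        Finset.sum_const, Finset.card_range, nsmul_eq_mul]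
      push_cast
      ring
    rw [h3, if_neg (by omega), if_neg (by omega)]
    ring
  rw [hsplit, Matrix.det_add_replicateCol_mul_replicateRow hunit, hdet, hinv, Matrix.det_unique]
  have hentry : ((1 + Matrix.replicateRow Unit (fun _ : Fin (m + 3) => (1 : ℝ)) *
      Matrix.diagonal (fun i => (d i)⁻¹) *
      Matrix.replicateCol Unit (fun _ : Fin (m + 3) => (-1 : ℝ)) : Matrix Unit Unit ℝ))
      (default : Unit) (default : Unit)
      = 1 - (((m : ℝ) + 1) * x⁻¹ + 2 * (x + 1)⁻¹) := by
    simp [Matrix.mul_apply, Matrix.one_apply, Matrix.diagonal_apply]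
    rw [← hsum, sub_eq_add_neg]
  rw [hentry]
  push_cast
  field_simp
  ring

theorem stmt_7 (n : ℕ) (hn : 3 ≤ n) :
    (covMatrix n).charpoly.roots
      = Multiset.replicate (n - 3) (0 : ℝ) +
        {-1, ((n : ℝ) - 1 + Real.sqrt ((n : ℝ) ^ 2 + 2 * n - 7)) / 2,
             ((n : ℝ) - 1 - Real.sqrt ((n : ℝ) ^ 2 + 2 * n - 7)) / 2} := by
  have hn3 : (3 : ℝ) ≤ (n : ℝ) := by exact_mod_cast hn
  set s : ℝ := Real.sqrt ((n : ℝ) ^ 2 + 2 * n - 7) with hs_def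
  set r1 : ℝ := ((n : ℝ) - 1 + s) / 2 with hr1
  set r2 : ℝ := ((n : ℝ) - 1 - s) / 2 with hr2
  have hs : s ^ 2 = (n : ℝ) ^ 2 + 2 * n - 7 := Real.sq_sqrt (by nlinarith)
  have hquad : ∀ x : ℝ, (x - r1) * (x - r2) = x ^ 2 - ((n : ℝ) - 1) * x - ((n : ℝ) - 2) := by
    intro x
    rw [hr1, hr2]
    linear_combination (-(1 : ℝ) / 4) * hs
  have hP : (covMatrix n).charpoly
      = X ^ (n - 3) * (X + 1) * ((X - C r1) * (X - C r2)) := by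
    apply Polynomial.eq_of_infinite_eval_eq
    apply Set.Infinite.mono (s := Set.Ioi (1 : ℝ)) ?_ (Set.Ioi_infinite 1)
    intro x hx
    have hx1 : (1 : ℝ) < x := hx
    simp only [Set.mem_setOf_eq, eval_mul, eval_pow, eval_add, eval_sub, eval_X, eval_C,
      eval_one]
    rw [eval_charpoly', det_cov n hn x hx1, hquad x]
  have hXne : (X : ℝ[X]) ^ (n - 3) ≠ 0 := pow_ne_zero _ X_ne_zero
  have h1ne : (X + 1 : ℝ[X]) ≠ 0 := by
    have : (X + 1 : ℝ[X]) = X - C (-1) := by simp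
    rw [this]; exact X_sub_C_ne_zero _
  have h2ne : (X - C r1 : ℝ[X]) ≠ 0 := X_sub_C_ne_zero _
  have h3ne : (X - C r2 : ℝ[X]) ≠ 0 := X_sub_C_ne_zero _
  rw [hP, roots_mul (by exact mul_ne_zero (mul_ne_zero hXne h1ne) (mul_ne_zero h2ne h3ne)),
    roots_mul (mul_ne_zero hXne h1ne), roots_mul (mul_ne_zero h2ne h3ne),
    roots_pow, roots_X, roots_X_sub_C, roots_X_sub_C]
  have hX1 : (X + 1 : ℝ[X]).roots = {-1} := by
    have : (X + 1 : ℝ[X]) = X - C (-1) := by simp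
    rw [this, roots_X_sub_C]
  rw [hX1]
  have : (n - 3) • ({0} : Multiset ℝ) = Multiset.replicate (n - 3) 0 := by
    simp [Multiset.nsmul_singleton]
  rw [this, add_assoc]
  congr 1
end

section
/- For n ≥ 3, the sum of the absolute values of the eigenvalues of the n×n matrix A (off-diagonal entries 1, first n-2 diagonal entries 1, last two diagonal entries 0) equals 1 + √(n²+2n-7). -/
open Polynomial Matrix

lemma covMatrix_det_eval (n : ℕ) (hn : 3 ≤ n) (x : ℝ) (hx0 : x ≠ 0) (hx1 : x + 1 ≠ 0) :
    (x • (1 : Matrix (Fin n) (Fin n) ℝ) - covMatrix n).det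
      = x ^ (n-3) * (x+1) * (x^2 - ((n:ℝ)-1)*x - ((n:ℝ)-2)) := by
  set d : Fin n → ℝ := fun i => if (i:ℕ) < n - 2 then x else x + 1 with hd
  have hcard : (Finset.univ.filter (fun i : Fin n => (i:ℕ) < n - 2)).card = n - 2 := by
    have heq : (Finset.univ.filter (fun i : Fin n => (i:ℕ) < n - 2))
        = Finset.Iio (⟨n-2, by omega⟩ : Fin n) := by
      ext i; simp [Fin.lt_iff_val_lt_val]
    rw [heq, Fin.card_Iio]
  have hcard2 : (Finset.univ.filter (fun i : Fin n => ¬ ((i:ℕ) < n - 2))).card = 2 := by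
    have := Finset.card_filter_add_card_filter_not
      (s := (Finset.univ : Finset (Fin n))) (p := fun i : Fin n => (i:ℕ) < n - 2)
    simp only [Finset.card_univ, Fintype.card_fin] at this
    omega
  have hprod : ∏ i, d i = x ^ (n-2) * (x+1) ^ 2 := by
    rw [hd, Finset.prod_ite, Finset.prod_const, Finset.prod_const, hcard, hcard2]
  have hkey : x • (1 : Matrix (Fin n) (Fin n) ℝ) - covMatrix n
      = diagonal d + replicateCol Unit (fun _ : Fin n => (-1:ℝ)) * replicateRow Unit (fun _ : Fin n => (1:ℝ)) := by
    ext i j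
    by_cases h : i = j
    · subst h
      by_cases h2 : (i:ℕ) < n - 2 <;>
        simp [covMatrix, diagonal, hd, h2, Matrix.mul_apply, one_apply] <;> ring
    · simp [covMatrix, diagonal, hd, h, Matrix.mul_apply, one_apply, Ne.symm h]
  have hpne : x ^ (n-2) * (x+1) ^ 2 ≠ 0 :=
    mul_ne_zero (pow_ne_zero _ hx0) (pow_ne_zero _ hx1)
  have hunit : IsUnit (diagonal d).det := by
    rw [det_diagonal, hprod]; exact isUnit_iff_ne_zero.2 hpne
  rw [hkey, det_add_replicateCol_mul_replicateRow hunit]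
  have hdne : ∀ i, d i ≠ 0 := by
    intro i; rw [hd]; dsimp only; split <;> assumption
  have hinv : (diagonal d)⁻¹ = diagonal (fun i => (d i)⁻¹) := by
    apply inv_eq_right_inv
    have h1 : (fun i => d i * (d i)⁻¹) = fun _ : Fin n => (1:ℝ) :=
      funext fun i => mul_inv_cancel₀ (hdne i)
    rw [diagonal_mul_diagonal, h1]
    exact diagonal_one
  have hsum : ∑ i, (d i)⁻¹ = ((n:ℝ)-2) * x⁻¹ + 2 * (x+1)⁻¹ := by
    rw [hd]
    simp only [apply_ite Inv.inv]
    rw [Finset.sum_ite, Finset.sum_const, Finset.sum_const, hcard, hcard2]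
    rw [nsmul_eq_mul, nsmul_eq_mul]
    push_cast [Nat.cast_sub (by omega : 2 ≤ n)]
    ring
  have h11 : (1 + replicateRow Unit (fun _ : Fin n => (1:ℝ)) * (diagonal d)⁻¹
      * replicateCol Unit (fun _ : Fin n => (-1:ℝ))).det = 1 - (((n:ℝ)-2) * x⁻¹ + 2 * (x+1)⁻¹) := by
    rw [det_unique, hinv]
    simp only [Matrix.add_apply, Matrix.one_apply_eq, Matrix.mul_apply, Matrix.replicateRow_apply,
      Matrix.replicateCol_apply, diagonal_apply, Finset.sum_ite_eq, Finset.mem_univ, if_true]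
    simp only [one_mul, Finset.sum_ite_eq, Finset.mem_univ, if_true, mul_neg_one]
    simp only [Finset.sum_ite_eq', Finset.mem_univ, if_true]
    rw [Finset.sum_neg_distrib, hsum]
    ring
  rw [det_diagonal, hprod, h11]
  have h32 : n - 2 = (n-3) + 1 := by omega
  rw [h32, pow_succ]
  field_simp
  ring

lemma charpoly_eval (n : ℕ) (M : Matrix (Fin n) (Fin n) ℝ) (x : ℝ) :
    M.charpoly.eval x = (x • (1 : Matrix (Fin n) (Fin n) ℝ) - M).det := by
  rw [Matrix.charpoly]
  rw [show (Polynomial.eval x : ℝ[X] → ℝ) = (Polynomial.evalRingHom x : ℝ[X] →+* ℝ) from rfl]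
  rw [RingHom.map_det]
  congr 1
  ext i j
  by_cases h : i = j
  · subst h; simp [charmatrix_apply_eq, one_apply]
  · simp [charmatrix_apply_ne _ _ _ h, one_apply, h]

theorem stmt_8 (n : ℕ) (hn : 3 ≤ n) :
    ((covMatrix n).charpoly.roots.map (fun x => |x|)).sum
      = 1 + Real.sqrt ((n : ℝ) ^ 2 + 2 * n - 7) := by
  have hn3 : (3:ℝ) ≤ (n:ℝ) := by exact_mod_cast hn
  set s : ℝ := Real.sqrt ((n : ℝ) ^ 2 + 2 * n - 7) with hs
  have harg : (0:ℝ) ≤ (n : ℝ) ^ 2 + 2 * n - 7 := by nlinarith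
  have hs2 : s ^ 2 = (n : ℝ) ^ 2 + 2 * n - 7 := Real.sq_sqrt harg
  have hs0 : 0 ≤ s := Real.sqrt_nonneg _
  set r₁ : ℝ := (((n:ℝ) - 1) + s) / 2 with hr1
  set r₂ : ℝ := (((n:ℝ) - 1) - s) / 2 with hr2
  have hsumr : r₁ + r₂ = (n:ℝ) - 1 := by rw [hr1, hr2]; ring
  have hprodr : r₁ * r₂ = -((n:ℝ) - 2) := by
    rw [hr1, hr2]; nlinarith [hs2]
  set p : ℝ[X] := X ^ (n-3) * (X - C (-1)) * ((X - C r₁) * (X - C r₂)) with hp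
  have hfac : (covMatrix n).charpoly = p := by
    have hne : (X * (X - C (-1)) : ℝ[X]) ≠ 0 :=
      mul_ne_zero X_ne_zero (X_sub_C_ne_zero _)
    apply mul_left_cancel₀ hne
    apply Polynomial.funext
    intro x
    simp only [eval_mul, eval_X, eval_sub, eval_C, charpoly_eval, hp, eval_pow]
    by_cases hx0 : x = 0
    · simp [hx0]
    by_cases hx1 : x + 1 = 0
    · have : x - (-1) = 0 := by linarith
      rw [this]; ring
    rw [covMatrix_det_eval n hn x hx0 hx1]
    have hxm : x - (-1) = x + 1 := by ring
    rw [hxm]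
    linear_combination (x*(x+1)^2*x^(n-3)*x) * hsumr - (x*(x+1)^2*x^(n-3)) * hprodr
  have hroots : (covMatrix n).charpoly.roots
      = (n-3) • ({0} : Multiset ℝ) + ({-1} + ({r₁} + {r₂})) := by
    rw [hfac, hp]
    rw [roots_mul (mul_ne_zero (mul_ne_zero (pow_ne_zero _ X_ne_zero) (X_sub_C_ne_zero _))
      (mul_ne_zero (X_sub_C_ne_zero _) (X_sub_C_ne_zero _)))]
    rw [roots_mul (mul_ne_zero (pow_ne_zero _ X_ne_zero) (X_sub_C_ne_zero _))]
    rw [roots_mul (mul_ne_zero (X_sub_C_ne_zero _) (X_sub_C_ne_zero _))]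
    rw [roots_pow, roots_X, roots_X_sub_C, roots_X_sub_C, roots_X_sub_C, add_assoc]
  have hr1pos : 0 ≤ r₁ := by rw [hr1]; linarith
  have hr2neg : r₂ ≤ 0 := by
    have : (n:ℝ) - 1 ≤ s := by
      rw [hs]
      rw [show ((n:ℝ)^2 + 2*n - 7) = ((n:ℝ)-1)^2 + (4*n - 8) by ring]
      have h48 : (0:ℝ) ≤ 4*n - 8 := by linarith
      nlinarith [Real.sq_sqrt (show (0:ℝ) ≤ ((n:ℝ)-1)^2 + (4*n-8) by positivity),
        Real.sqrt_nonneg (((n:ℝ)-1)^2 + (4*n-8)),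
        Real.sqrt_le_sqrt (show ((n:ℝ)-1)^2 ≤ ((n:ℝ)-1)^2 + (4*n-8) by linarith),
        Real.sqrt_sq (show (0:ℝ) ≤ (n:ℝ)-1 by linarith)]
    rw [hr2]; linarith
  rw [hroots]
  simp only [Multiset.nsmul_singleton, Multiset.map_add, Multiset.sum_add,
    Multiset.map_replicate, Multiset.map_singleton, Multiset.sum_replicate,
    Multiset.sum_singleton]
  rw [abs_of_nonneg hr1pos, abs_of_nonpos hr2neg]
  simp only [abs_zero, abs_neg, abs_one, smul_zero]
  rw [hr1, hr2]
  ring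
end
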